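/- Let M ≥ 3 be an odd integer, n ∈ {1,2}, and Θ̄ = (θ̄_1,…,θ̄_{M-1}) with θ̄_k := k n π / M (and θ̄_j := j n π / M for any integer j). Then for all l, m ∈ {1,…,M-1}: sin²(θ̄_1) · [∇F̄(Θ̄)]_{lm} = 2 sin²(θ̄_1) - (-1)^m sin(2θ̄_1) sin(2θ̄_m) if l = m; sin²(θ̄_1) · [∇F̄(Θ̄)]_{lm} = (-1)^{m+1} sin(2θ̄_1)(sin(2θ̄_m) + (-1)^l sin(2θ̄_{l-m})) if l < m; and sin²(θ̄_1) · [∇F̄(Θ̄)]_{lm} = (-1)^{m+1} sin(2θ̄_1)(sin(2θ̄_m) - (-1)^l sin(2θ̄_{l-m})) if m < l. -/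

import Mathlib

open Complex Real Finset

noncomputable section

/-- The angles `θ_0 = 0`, `θ_j = Θ_j` for `1 ≤ j ≤ M-1`, read off a vector `Θ ∈ ℝ^{M-1}`. -/
def thN (M : ℕ) (Θ : Fin (M - 1) → ℝ) (j : ℕ) : ℝ :=
  if h : 1 ≤ j ∧ j ≤ M - 1 then Θ ⟨j - 1, by omega⟩ else 0

/-- `𝒦̄(Θ)`. -/
def KbarV (M : ℕ) (Θ : Fin (M - 1) → ℝ) : ℂ :=
  (1 + (-1 : ℂ) ^ M) / 2 +
    (-1 : ℂ) ^ M * ∑ k ∈ Finset.Icc 1 (M - 1),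
      (-1 : ℂ) ^ k * Complex.exp (-2 * Complex.I * (thN M Θ k : ℂ))

/-- `𝓗̄_l(Θ)`. -/
def HbarV (M : ℕ) (Θ : Fin (M - 1) → ℝ) (l : ℕ) : ℂ :=
  (1 - (-1 : ℂ) ^ M) / 2 +
    (∑ k ∈ Finset.range l,
      (-1 : ℂ) ^ (l + k) * Complex.exp (2 * Complex.I * ((thN M Θ l - thN M Θ k : ℝ) : ℂ))) +
    (-1 : ℂ) ^ M * ∑ k ∈ Finset.Icc l (M - 1),
      (-1 : ℂ) ^ (l + k) * Complex.exp (2 * Complex.I * ((thN M Θ l - thN M Θ k : ℝ) : ℂ))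

/-- `F̄_l(Θ) = Im(𝓗̄_l(Θ)/𝒦̄(Θ))`. -/
def FbarV (M : ℕ) (l : ℕ) (Θ : Fin (M - 1) → ℝ) : ℝ := (HbarV M Θ l / KbarV M Θ).im

/-- The partial derivative `∂F̄_l/∂θ_m` at `Θ` (here `m : Fin (M-1)` indexes `θ_{m+1}`). -/
def partialF (M : ℕ) (l : ℕ) (Θ : Fin (M - 1) → ℝ) (m : Fin (M - 1)) : ℝ :=
  deriv (fun t : ℝ => FbarV M l (Function.update Θ m t)) (Θ m)

/-- The vector `Θ̄ = (θ̄_1, …, θ̄_{M-1})`, `θ̄_k = k n π / M`. -/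
def ThbarV (M n : ℕ) : Fin (M - 1) → ℝ := fun k => ((k : ℕ) + 1) * n * π / M

/-- The angles `θ̄_j = j n π / M`, for an arbitrary integer `j`. -/
def thbarZ (M n : ℕ) (j : ℤ) : ℝ := (j : ℝ) * n * π / M

lemma sin_alpha_pos (M n : ℕ) (hM : 3 ≤ M) (hn : n = 1 ∨ n = 2) :
    0 < Real.sin ((n : ℝ) * π / M) := by
  have hM' : (3:ℝ) ≤ (M:ℝ) := by exact_mod_cast hM
  have hp := Real.pi_pos
  have h3 : 3 * π ≤ π * M := by nlinarith
  apply Real.sin_pos_of_pos_of_lt_pi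
  · apply div_pos (mul_pos (by rcases hn with h | h <;> simp [h]) Real.pi_pos)
    positivity
  · rw [div_lt_iff₀ (by positivity)]
    rcases hn with h | h <;> subst h <;> push_cast <;> linarith

lemma cos_alpha_ne (M n : ℕ) (hM : 3 ≤ M) (hModd : Odd M) (hn : n = 1 ∨ n = 2) :
    Real.cos ((n : ℝ) * π / M) ≠ 0 := by
  intro h
  rw [Real.cos_eq_zero_iff] at h
  obtain ⟨k, hk⟩ := h
  have hM0 : (M : ℝ) ≠ 0 := by positivity
  have h2 : (2 * n : ℝ) = (M : ℝ) * (2 * k + 1) := by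
    field_simp at hk
    nlinarith [hk, Real.pi_ne_zero, Real.pi_pos]
  have h3 : (2 * n : ℤ) = (M : ℤ) * (2 * k + 1) := by exact_mod_cast h2
  obtain ⟨j, hj⟩ := hModd
  rcases hn with h | h <;> subst h <;> push_cast at h3
  · have hd : (M:ℤ) ∣ 2 := Dvd.intro _ h3.symm
    have := Int.le_of_dvd (by norm_num) hd
    omega
  · have hd : (M:ℤ) ∣ 4 := Dvd.intro _ h3.symm
    have := Int.le_of_dvd (by norm_num) hd
    have hM3 : M = 3 := by omega
    subst hM3
    omega

lemma thN_thbar (M n : ℕ) (k : ℕ) (hk : k ≤ M - 1) :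
    thN M (ThbarV M n) k = (k : ℝ) * ((n : ℝ) * π / M) := by
  unfold thN ThbarV
  rcases Nat.eq_zero_or_pos k with h | h
  · subst h; simp
  · rw [dif_pos ⟨h, hk⟩]
    have h1 : (((k - 1 : ℕ) : ℝ) + 1) = (k : ℝ) := by
      rw [Nat.cast_sub (by omega : 1 ≤ k)]; push_cast; ring
    rw [show (((⟨k - 1, by omega⟩ : Fin (M - 1)) : ℕ) : ℝ) = ((k - 1 : ℕ) : ℝ) from rfl, h1]
    ring

lemma KH_eval (M n : ℕ) (hM : 3 ≤ M) (hModd : Odd M)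
    (hs : Real.sin ((n : ℝ) * π / M) ≠ 0) (hc : Real.cos ((n : ℝ) * π / M) ≠ 0)
    (hMα : (M : ℝ) * ((n : ℝ) * π / M) = n * π) :
    KbarV M (ThbarV M n) =
      -I * (Real.sin ((n : ℝ) * π / M) : ℂ) / (Real.cos ((n : ℝ) * π / M) : ℂ) ∧
    ∀ l, 1 ≤ l → l ≤ M - 1 → HbarV M (ThbarV M n) l =
      -I * (Real.sin ((n : ℝ) * π / M) : ℂ) / (Real.cos ((n : ℝ) * π / M) : ℂ) := by
  set α : ℝ := (n : ℝ) * π / M with hαdef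
  set s : ℝ := Real.sin α with hsdef
  set c : ℝ := Real.cos α with hcdef
  set w : ℂ := cexp (2 * I * (α : ℂ)) with hwdef
  have hneg1 : ((-1 : ℂ)) ^ M = -1 := Odd.neg_one_pow hModd
  -- Euler
  have hu : cexp ((α : ℂ) * I) = (c : ℂ) + (s : ℂ) * I := by
    rw [Complex.exp_mul_I]
    simp [← Complex.ofReal_cos, ← Complex.ofReal_sin]
    rw [hcdef, hsdef]
  have hw2 : w = cexp ((α : ℂ) * I) ^ 2 := by
    rw [hwdef, show (2 * I * (α : ℂ)) = ((2 : ℕ) : ℂ) * ((α : ℂ) * I) by push_cast; ring,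
      Complex.exp_nat_mul]
  have hsc : ((s : ℂ)) ^ 2 + ((c : ℂ)) ^ 2 = 1 := by
    have := Real.sin_sq_add_cos_sq α
    exact_mod_cast congrArg (fun r : ℝ => (r : ℂ)) this
  have hplus : 1 + w = 2 * (c : ℂ) * cexp ((α : ℂ) * I) := by
    rw [hw2, hu]
    linear_combination ((s : ℂ)) ^ 2 * Complex.I_sq - hsc
  have hminus : 1 - w = -2 * I * (s : ℂ) * cexp ((α : ℂ) * I) := by
    rw [hw2, hu]
    linear_combination ((s : ℂ)) ^ 2 * Complex.I_sq - hsc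
  have h1w : (1 : ℂ) + w ≠ 0 := by
    rw [hplus]
    exact mul_ne_zero (mul_ne_zero two_ne_zero (Complex.ofReal_ne_zero.2 hc)) (Complex.exp_ne_zero _)
  have hwM : w ^ M = 1 := by
    rw [hwdef, ← Complex.exp_nat_mul]
    have hMα' : ((M : ℂ)) * (α : ℂ) = (n : ℂ) * (π : ℂ) := by
      exact_mod_cast congrArg (fun r : ℝ => (r : ℂ)) hMα
    rw [show ((M : ℂ)) * (2 * I * (α : ℂ)) = (n : ℂ) * (2 * (π : ℂ) * I) by
      linear_combination 2 * I * hMα']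
    exact Complex.exp_nat_mul_two_pi_mul_I n
  set p : ℂ := -w with hpdef
  have hp0 : p ≠ 0 := neg_ne_zero.2 (Complex.exp_ne_zero _)
  have hpM : p ^ M = -1 := by rw [hpdef, neg_pow, hneg1, hwM]; ring
  set G : ℂ := ∑ i ∈ Finset.range (M - 1), p ^ (i + 1) with hGdef
  have hGval : G * (1 + w) = 1 - w := by
    have h1 := geom_sum_mul p (M - 1)
    have hG : G = p * ∑ i ∈ Finset.range (M - 1), p ^ i := by
      rw [Finset.mul_sum]
      exact Finset.sum_congr rfl fun i _ => by rw [pow_succ']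
    have hpM1 : p * p ^ (M - 1) = -1 := by
      rw [← pow_succ', show M - 1 + 1 = M by omega, hpM]
    rw [hG]
    linear_combination (-p) * h1 - hpM1 + (p * (∑ i ∈ Finset.range (M - 1), p ^ i) + 1) * hpdef
  have hGsc : G = -I * (s : ℂ) / (c : ℂ) := by
    rw [eq_div_iff (Complex.ofReal_ne_zero.2 hc)]
    apply mul_right_cancel₀ h1w
    rw [show G * (c : ℂ) * (1 + w) = G * (1 + w) * (c : ℂ) by ring, hGval, hminus, hplus]
    ring
  -- generic term collapses
  have hterm : ∀ j : ℕ, p ^ j * ((-1 : ℂ) ^ j * cexp (-2 * I * (((j : ℝ) * α : ℝ) : ℂ))) = 1 := by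
    intro j
    have hwj : w ^ j = cexp ((j : ℂ) * (2 * I * (α : ℂ))) := (Complex.exp_nat_mul _ j).symm
    have h2 : cexp ((j : ℂ) * (2 * I * (α : ℂ))) * cexp (-2 * I * (((j : ℝ) * α : ℝ) : ℂ)) = 1 := by
      rw [← Complex.exp_add,
        show (j : ℂ) * (2 * I * (α : ℂ)) + -2 * I * (((j : ℝ) * α : ℝ) : ℂ) = 0 by
          push_cast; ring, Complex.exp_zero]
    calc p ^ j * ((-1 : ℂ) ^ j * cexp (-2 * I * (((j : ℝ) * α : ℝ) : ℂ)))
        = ((-1) * (-1) : ℂ) ^ j * (w ^ j * cexp (-2 * I * (((j : ℝ) * α : ℝ) : ℂ))) := by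
          rw [hpdef, neg_pow, mul_pow]; ring
      _ = 1 := by rw [neg_mul_neg, one_mul, one_pow, one_mul, hwj, h2]
  have hNterm : ∀ j : ℕ, j ≤ M - 1 →
      (-1 : ℂ) ^ j * cexp (-2 * I * (((j : ℝ) * α : ℝ) : ℂ)) = -p ^ (M - j) := by
    intro j hj
    apply mul_left_cancel₀ (pow_ne_zero j hp0)
    rw [hterm j, show p ^ j * -p ^ (M - j) = -(p ^ (j + (M - j))) by rw [pow_add]; ring,
      show j + (M - j) = M by omega, hpM]
    ring
  have hPterm : ∀ j : ℕ, (-1 : ℂ) ^ j * cexp (2 * I * (((j : ℝ) * α : ℝ) : ℂ)) = p ^ j := by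
    intro j
    rw [hpdef]
    conv_rhs => rw [neg_pow]
    congr 1
    rw [← Complex.exp_nat_mul]
    congr 1
    push_cast; ring
  have hsgn : ∀ a b : ℕ, b ≤ a → ((-1 : ℂ)) ^ (a + b) = (-1 : ℂ) ^ (a - b) := by
    intro a b h
    rw [show a + b = (a - b) + 2 * b by omega, pow_add, pow_mul]
    norm_num
  constructor
  · -- K
    unfold KbarV
    rw [hneg1]
    have hKsum : ∑ k ∈ Finset.Icc 1 (M - 1),
        (-1 : ℂ) ^ k * cexp (-2 * I * ((thN M (ThbarV M n) k : ℝ) : ℂ))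
        = ∑ k ∈ Finset.Icc 1 (M - 1), -p ^ (M - k) := by
      apply Finset.sum_congr rfl
      intro k hk
      rw [Finset.mem_Icc] at hk
      rw [thN_thbar M n k hk.2]
      exact hNterm k hk.2
    rw [hKsum, ← hGsc]
    rw [Finset.sum_neg_distrib]
    have hre : ∑ k ∈ Finset.Icc 1 (M - 1), p ^ (M - k) = G := by
      rw [show Finset.Icc 1 (M - 1) = Finset.Ico 1 M by
        rw [← Finset.Ico_add_one_right_eq_Icc]; congr 1; omega]
      rw [Finset.sum_Ico_eq_sum_range]
      rw [hGdef, ← Finset.sum_range_reflect (fun i => p ^ (i + 1)) (M - 1)]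
      apply Finset.sum_congr (by congr 1) 
      intro i hi
      rw [Finset.mem_range] at hi
      congr 1
      omega
    rw [hre]
    ring
  · -- H
    intro l hl1 hl2
    unfold HbarV
    rw [hneg1]
    have hS1 : ∑ k ∈ Finset.range l,
        (-1 : ℂ) ^ (l + k) * cexp (2 * I * ((thN M (ThbarV M n) l - thN M (ThbarV M n) k : ℝ) : ℂ))
        = ∑ j ∈ Finset.range l, p ^ (j + 1) := by
      have step : ∀ k ∈ Finset.range l, (-1 : ℂ) ^ (l + k) *
          cexp (2 * I * ((thN M (ThbarV M n) l - thN M (ThbarV M n) k : ℝ) : ℂ)) = p ^ (l - k) := by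
        intro k hk
        rw [Finset.mem_range] at hk
        rw [thN_thbar M n l hl2, thN_thbar M n k (by omega)]
        rw [show ((l : ℝ) * α - (k : ℝ) * α : ℝ) = (((l - k : ℕ) : ℝ) * α : ℝ) by
          rw [Nat.cast_sub (le_of_lt hk)]; ring]
        rw [hsgn l k (le_of_lt hk)]
        exact hPterm (l - k)
      rw [Finset.sum_congr rfl step]
      rw [← Finset.sum_range_reflect (fun i => p ^ (i + 1)) l]
      apply Finset.sum_congr rfl
      intro i hi
      rw [Finset.mem_range] at hi
      congr 1
      omega
    have hS2 : ∑ k ∈ Finset.Icc l (M - 1),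
        (-1 : ℂ) ^ (l + k) * cexp (2 * I * ((thN M (ThbarV M n) l - thN M (ThbarV M n) k : ℝ) : ℂ))
        = ∑ k ∈ Finset.Icc l (M - 1), -p ^ (M - (k - l)) := by
      apply Finset.sum_congr rfl
      intro k hk
      rw [Finset.mem_Icc] at hk
      rw [thN_thbar M n l hl2, thN_thbar M n k hk.2]
      rw [show (2 * I * (((l : ℝ) * α - (k : ℝ) * α : ℝ) : ℂ))
          = -2 * I * ((((k - l : ℕ) : ℝ) * α : ℝ) : ℂ) by
        rw [Nat.cast_sub hk.1]; push_cast; ring]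
      rw [show l + k = k + l from by omega, hsgn k l hk.1]
      exact hNterm (k - l) (by omega)
    rw [hS1, hS2, ← hGsc]
    rw [Finset.sum_neg_distrib]
    have hre2 : ∑ k ∈ Finset.Icc l (M - 1), p ^ (M - (k - l))
        = ∑ j ∈ Finset.range (M - l), p ^ ((l + j) + 1) := by
      rw [show Finset.Icc l (M - 1) = Finset.Ico l M by
        rw [← Finset.Ico_add_one_right_eq_Icc]; congr 1; omega]
      rw [Finset.sum_Ico_eq_sum_range]
      rw [← Finset.sum_range_reflect (fun j => p ^ ((l + j) + 1)) (M - l)]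
      apply Finset.sum_congr rfl
      intro i hi
      rw [Finset.mem_range] at hi
      congr 1
      omega
    rw [hre2]
    have hcomb : ∑ j ∈ Finset.range l, p ^ (j + 1)
        + ∑ j ∈ Finset.range (M - l), p ^ ((l + j) + 1) = ∑ j ∈ Finset.range M, p ^ (j + 1) := by
      rw [← Finset.sum_range_add (fun i => p ^ (i + 1)) l (M - l)]
      apply Finset.sum_congr (by rw [show l + (M - l) = M by omega]) (fun _ _ => rfl)
    have hfin : ∑ j ∈ Finset.range M, p ^ (j + 1) = G + p ^ M := by
      have h0 : ∑ j ∈ Finset.range ((M - 1) + 1), p ^ (j + 1)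
          = (∑ j ∈ Finset.range (M - 1), p ^ (j + 1)) + p ^ ((M - 1) + 1) :=
        Finset.sum_range_succ _ _
      rw [show (M - 1) + 1 = M by omega] at h0
      rw [h0, hGdef]
    calc (1 - -1) / 2 + ∑ j ∈ Finset.range l, p ^ (j + 1)
          + -1 * -∑ j ∈ Finset.range (M - l), p ^ ((l + j) + 1)
        = 1 + (∑ j ∈ Finset.range l, p ^ (j + 1) + ∑ j ∈ Finset.range (M - l), p ^ ((l + j) + 1)) := by
          ring
      _ = 1 + (G + p ^ M) := by rw [hcomb, hfin]
      _ = G := by rw [hpM]; ring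

lemma hasDeriv_of_path (f : ℝ → ℂ) (C D σ : ℂ) (t₀ : ℝ)
    (hpath : ∀ t, f t = C + D * cexp (σ * (t : ℂ))) :
    HasDerivAt f (D * (cexp (σ * (t₀ : ℂ)) * σ)) t₀ := by
  have h1 : HasDerivAt (fun t : ℝ => ((t : ℝ) : ℂ)) 1 t₀ := by
    simpa using (hasDerivAt_id t₀).ofReal_comp
  have h2 : HasDerivAt (fun t : ℝ => σ * ((t : ℝ) : ℂ)) σ t₀ := by
    simpa using h1.const_mul σ
  have h3 : HasDerivAt (fun t : ℝ => cexp (σ * ((t : ℝ) : ℂ)))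
      (cexp (σ * ((t₀ : ℝ) : ℂ)) * σ) t₀ := h2.cexp
  have h4 := (h3.const_mul D).const_add C
  have : (fun t : ℝ => C + D * cexp (σ * ((t : ℝ) : ℂ))) = f := by
    funext t; exact (hpath t).symm
  rwa [this] at h4

lemma partialF_eq (M l : ℕ) (Θ : Fin (M - 1) → ℝ) (fm : Fin (M - 1)) (H' K' : ℂ)
    (hH : HasDerivAt (fun t => HbarV M (Function.update Θ fm t) l) H' (Θ fm))
    (hK : HasDerivAt (fun t => KbarV M (Function.update Θ fm t)) K' (Θ fm))
    (hKne : KbarV M Θ ≠ 0) :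
    partialF M l Θ fm =
      ((H' * KbarV M Θ - HbarV M Θ l * K') / (KbarV M Θ) ^ 2).im := by
  have hΘ : Function.update Θ fm (Θ fm) = Θ := Function.update_eq_self fm Θ
  have hKne' : KbarV M (Function.update Θ fm (Θ fm)) ≠ 0 := by rw [hΘ]; exact hKne
  have hdiv := hH.div hK hKne'
  have him := Complex.imCLM.hasFDerivAt.comp_hasDerivAt (Θ fm) hdiv
  have hfeq : (⇑Complex.imCLM ∘ ((fun t =>
      HbarV M (Function.update Θ fm t) l) / fun t => KbarV M (Function.update Θ fm t)))
      = fun t => FbarV M l (Function.update Θ fm t) := by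
    funext t; simp [FbarV, Function.comp]
  rw [hfeq] at him
  have := him.deriv
  rw [partialF, this, hΘ]
  simp

lemma thN_update (M n : ℕ) (m : ℕ) (hm1 : 1 ≤ m) (hm2 : m ≤ M - 1) (t : ℝ) (k : ℕ) :
    thN M (Function.update (ThbarV M n) ⟨m - 1, Nat.sub_lt_sub_right hm1 (by omega)⟩ t) k
      = if k = m then t else thN M (ThbarV M n) k := by
  unfold thN
  by_cases hk : 1 ≤ k ∧ k ≤ M - 1
  · rw [dif_pos hk, dif_pos hk, Function.update_apply]
    by_cases h : k = m
    · rw [if_pos h, if_pos (by simp [Fin.ext_iff]; omega)]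
    · rw [if_neg (by simp [Fin.ext_iff]; omega), if_neg h]
  · rw [dif_neg hk, dif_neg hk, if_neg (by omega)]

lemma thN_self (M n : ℕ) (m : ℕ) (hm1 : 1 ≤ m) (hm2 : m ≤ M - 1) :
    thN M (ThbarV M n) m = ThbarV M n ⟨m - 1, Nat.sub_lt_sub_right hm1 (by omega)⟩ := by
  unfold thN; rw [dif_pos ⟨hm1, hm2⟩]

lemma Kpath (M n m : ℕ) (hM : 3 ≤ M) (hm1 : 1 ≤ m) (hm2 : m ≤ M - 1) (t : ℝ) :
    KbarV M (Function.update (ThbarV M n) ⟨m - 1, Nat.sub_lt_sub_right hm1 (by omega)⟩ t)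
      = (KbarV M (ThbarV M n)
          - (-1 : ℂ) ^ M * (-1) ^ m * cexp (-2 * I * ((thN M (ThbarV M n) m : ℝ) : ℂ)))
        + ((-1 : ℂ) ^ M * (-1) ^ m) * cexp (-2 * I * (t : ℂ)) := by
  have hmIcc : m ∈ Finset.Icc 1 (M - 1) := Finset.mem_Icc.2 ⟨hm1, hm2⟩
  unfold KbarV
  rw [Finset.sum_eq_sum_sdiff_singleton_add hmIcc
      (fun k => (-1 : ℂ) ^ k *
        cexp (-2 * I * ((thN M (Function.update (ThbarV M n) ⟨m - 1, Nat.sub_lt_sub_right hm1 (by omega)⟩ t) k : ℝ) : ℂ))),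
    Finset.sum_eq_sum_sdiff_singleton_add hmIcc
      (fun k => (-1 : ℂ) ^ k * cexp (-2 * I * ((thN M (ThbarV M n) k : ℝ) : ℂ)))]
  have hdiff : ∑ k ∈ Finset.Icc 1 (M - 1) \ {m}, (-1 : ℂ) ^ k *
        cexp (-2 * I * ((thN M (Function.update (ThbarV M n) ⟨m - 1, Nat.sub_lt_sub_right hm1 (by omega)⟩ t) k : ℝ) : ℂ))
      = ∑ k ∈ Finset.Icc 1 (M - 1) \ {m}, (-1 : ℂ) ^ k *
        cexp (-2 * I * ((thN M (ThbarV M n) k : ℝ) : ℂ)) := by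
    apply Finset.sum_congr rfl
    intro k hk
    rw [Finset.mem_sdiff, Finset.mem_singleton] at hk
    rw [thN_update M n m hm1 hm2 t k, if_neg hk.2]
  rw [hdiff, thN_update M n m hm1 hm2 t m, if_pos rfl]
  ring

lemma Hpath_lt (M n l m : ℕ) (hm1 : 1 ≤ m) (hm2 : m ≤ M - 1) (hl2 : l ≤ M - 1)
    (hml : m < l) (t : ℝ) :
    HbarV M (Function.update (ThbarV M n) ⟨m - 1, Nat.sub_lt_sub_right hm1 (by omega)⟩ t) l
      = ((1 - (-1 : ℂ) ^ M) / 2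
          + (∑ k ∈ Finset.range l \ {m}, (-1 : ℂ) ^ (l + k) *
              cexp (2 * I * ((thN M (ThbarV M n) l - thN M (ThbarV M n) k : ℝ) : ℂ)))
          + (-1 : ℂ) ^ M * ∑ k ∈ Finset.Icc l (M - 1), (-1 : ℂ) ^ (l + k) *
              cexp (2 * I * ((thN M (ThbarV M n) l - thN M (ThbarV M n) k : ℝ) : ℂ)))
        + ((-1 : ℂ) ^ (l + m) * cexp (2 * I * ((thN M (ThbarV M n) l : ℝ) : ℂ)))
            * cexp (-2 * I * (t : ℂ)) := by
  have hlm : l ≠ m := by omega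
  have hmr : m ∈ Finset.range l := Finset.mem_range.2 hml
  unfold HbarV
  rw [Finset.sum_eq_sum_sdiff_singleton_add hmr
      (fun k => (-1 : ℂ) ^ (l + k) *
        cexp (2 * I * ((thN M (Function.update (ThbarV M n) ⟨m - 1, Nat.sub_lt_sub_right hm1 (by omega)⟩ t) l
          - thN M (Function.update (ThbarV M n) ⟨m - 1, Nat.sub_lt_sub_right hm1 (by omega)⟩ t) k : ℝ) : ℂ)))]
  have hdiff : ∑ k ∈ Finset.range l \ {m}, (-1 : ℂ) ^ (l + k) *
        cexp (2 * I * ((thN M (Function.update (ThbarV M n) ⟨m - 1, Nat.sub_lt_sub_right hm1 (by omega)⟩ t) l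
          - thN M (Function.update (ThbarV M n) ⟨m - 1, Nat.sub_lt_sub_right hm1 (by omega)⟩ t) k : ℝ) : ℂ))
      = ∑ k ∈ Finset.range l \ {m}, (-1 : ℂ) ^ (l + k) *
        cexp (2 * I * ((thN M (ThbarV M n) l - thN M (ThbarV M n) k : ℝ) : ℂ)) := by
    apply Finset.sum_congr rfl
    intro k hk
    rw [Finset.mem_sdiff, Finset.mem_singleton] at hk
    rw [thN_update M n m hm1 hm2 t l, if_neg hlm, thN_update M n m hm1 hm2 t k, if_neg hk.2]
  have hdiff2 : ∑ k ∈ Finset.Icc l (M - 1), (-1 : ℂ) ^ (l + k) *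
        cexp (2 * I * ((thN M (Function.update (ThbarV M n) ⟨m - 1, Nat.sub_lt_sub_right hm1 (by omega)⟩ t) l
          - thN M (Function.update (ThbarV M n) ⟨m - 1, Nat.sub_lt_sub_right hm1 (by omega)⟩ t) k : ℝ) : ℂ))
      = ∑ k ∈ Finset.Icc l (M - 1), (-1 : ℂ) ^ (l + k) *
        cexp (2 * I * ((thN M (ThbarV M n) l - thN M (ThbarV M n) k : ℝ) : ℂ)) := by
    apply Finset.sum_congr rfl
    intro k hk
    rw [Finset.mem_Icc] at hk
    rw [thN_update M n m hm1 hm2 t l, if_neg hlm, thN_update M n m hm1 hm2 t k,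
      if_neg (by omega)]
  rw [hdiff, hdiff2, thN_update M n m hm1 hm2 t l, if_neg hlm,
    thN_update M n m hm1 hm2 t m, if_pos rfl]
  rw [show cexp (2 * I * ((thN M (ThbarV M n) l - t : ℝ) : ℂ))
      = cexp (2 * I * ((thN M (ThbarV M n) l : ℝ) : ℂ)) * cexp (-2 * I * (t : ℂ)) by
    rw [← Complex.exp_add]; congr 1; push_cast; ring]
  ring

lemma Hpath_gt (M n l m : ℕ) (hm1 : 1 ≤ m) (hm2 : m ≤ M - 1) (hl1 : 1 ≤ l)
    (hlm : l < m) (t : ℝ) :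
    HbarV M (Function.update (ThbarV M n) ⟨m - 1, Nat.sub_lt_sub_right hm1 (by omega)⟩ t) l
      = ((1 - (-1 : ℂ) ^ M) / 2
          + (∑ k ∈ Finset.range l, (-1 : ℂ) ^ (l + k) *
              cexp (2 * I * ((thN M (ThbarV M n) l - thN M (ThbarV M n) k : ℝ) : ℂ)))
          + (-1 : ℂ) ^ M * ∑ k ∈ Finset.Icc l (M - 1) \ {m}, (-1 : ℂ) ^ (l + k) *
              cexp (2 * I * ((thN M (ThbarV M n) l - thN M (ThbarV M n) k : ℝ) : ℂ)))
        + ((-1 : ℂ) ^ M * ((-1 : ℂ) ^ (l + m) * cexp (2 * I * ((thN M (ThbarV M n) l : ℝ) : ℂ))))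
            * cexp (-2 * I * (t : ℂ)) := by
  have hlm' : l ≠ m := by omega
  have hmI : m ∈ Finset.Icc l (M - 1) := Finset.mem_Icc.2 ⟨by omega, hm2⟩
  unfold HbarV
  rw [Finset.sum_eq_sum_sdiff_singleton_add hmI
      (fun k => (-1 : ℂ) ^ (l + k) *
        cexp (2 * I * ((thN M (Function.update (ThbarV M n) ⟨m - 1, Nat.sub_lt_sub_right hm1 (by omega)⟩ t) l
          - thN M (Function.update (ThbarV M n) ⟨m - 1, Nat.sub_lt_sub_right hm1 (by omega)⟩ t) k : ℝ) : ℂ)))]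
  have hdiff : ∑ k ∈ Finset.Icc l (M - 1) \ {m}, (-1 : ℂ) ^ (l + k) *
        cexp (2 * I * ((thN M (Function.update (ThbarV M n) ⟨m - 1, Nat.sub_lt_sub_right hm1 (by omega)⟩ t) l
          - thN M (Function.update (ThbarV M n) ⟨m - 1, Nat.sub_lt_sub_right hm1 (by omega)⟩ t) k : ℝ) : ℂ))
      = ∑ k ∈ Finset.Icc l (M - 1) \ {m}, (-1 : ℂ) ^ (l + k) *
        cexp (2 * I * ((thN M (ThbarV M n) l - thN M (ThbarV M n) k : ℝ) : ℂ)) := by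
    apply Finset.sum_congr rfl
    intro k hk
    rw [Finset.mem_sdiff, Finset.mem_singleton] at hk
    rw [thN_update M n m hm1 hm2 t l, if_neg hlm', thN_update M n m hm1 hm2 t k, if_neg hk.2]
  have hdiff2 : ∑ k ∈ Finset.range l, (-1 : ℂ) ^ (l + k) *
        cexp (2 * I * ((thN M (Function.update (ThbarV M n) ⟨m - 1, Nat.sub_lt_sub_right hm1 (by omega)⟩ t) l
          - thN M (Function.update (ThbarV M n) ⟨m - 1, Nat.sub_lt_sub_right hm1 (by omega)⟩ t) k : ℝ) : ℂ))
      = ∑ k ∈ Finset.range l, (-1 : ℂ) ^ (l + k) *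
        cexp (2 * I * ((thN M (ThbarV M n) l - thN M (ThbarV M n) k : ℝ) : ℂ)) := by
    apply Finset.sum_congr rfl
    intro k hk
    rw [Finset.mem_range] at hk
    rw [thN_update M n m hm1 hm2 t l, if_neg hlm', thN_update M n m hm1 hm2 t k,
      if_neg (by omega)]
  rw [hdiff, hdiff2, thN_update M n m hm1 hm2 t l, if_neg hlm',
    thN_update M n m hm1 hm2 t m, if_pos rfl]
  rw [show cexp (2 * I * ((thN M (ThbarV M n) l - t : ℝ) : ℂ))
      = cexp (2 * I * ((thN M (ThbarV M n) l : ℝ) : ℂ)) * cexp (-2 * I * (t : ℂ)) by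
    rw [← Complex.exp_add]; congr 1; push_cast; ring]
  ring

lemma Hpath_eq (M n m : ℕ) (hm1 : 1 ≤ m) (hm2 : m ≤ M - 1) (t : ℝ) :
    HbarV M (Function.update (ThbarV M n) ⟨m - 1, Nat.sub_lt_sub_right hm1 (by omega)⟩ t) m
      = ((1 - (-1 : ℂ) ^ M) / 2 + (-1 : ℂ) ^ M)
        + ((∑ k ∈ Finset.range m, (-1 : ℂ) ^ (m + k) *
              cexp (-2 * I * ((thN M (ThbarV M n) k : ℝ) : ℂ)))
          + (-1 : ℂ) ^ M * ∑ k ∈ Finset.Icc m (M - 1) \ {m}, (-1 : ℂ) ^ (m + k) *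
              cexp (-2 * I * ((thN M (ThbarV M n) k : ℝ) : ℂ)))
            * cexp (2 * I * (t : ℂ)) := by
  have hmI : m ∈ Finset.Icc m (M - 1) := Finset.mem_Icc.2 ⟨le_refl m, hm2⟩
  unfold HbarV
  rw [Finset.sum_eq_sum_sdiff_singleton_add hmI
      (fun k => (-1 : ℂ) ^ (m + k) *
        cexp (2 * I * ((thN M (Function.update (ThbarV M n) ⟨m - 1, Nat.sub_lt_sub_right hm1 (by omega)⟩ t) m
          - thN M (Function.update (ThbarV M n) ⟨m - 1, Nat.sub_lt_sub_right hm1 (by omega)⟩ t) k : ℝ) : ℂ)))]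
  have hsplit : ∀ k : ℕ, k ≠ m → k ≤ M - 1 →
      (-1 : ℂ) ^ (m + k) *
        cexp (2 * I * ((thN M (Function.update (ThbarV M n) ⟨m - 1, Nat.sub_lt_sub_right hm1 (by omega)⟩ t) m
          - thN M (Function.update (ThbarV M n) ⟨m - 1, Nat.sub_lt_sub_right hm1 (by omega)⟩ t) k : ℝ) : ℂ))
      = ((-1 : ℂ) ^ (m + k) * cexp (-2 * I * ((thN M (ThbarV M n) k : ℝ) : ℂ)))
          * cexp (2 * I * (t : ℂ)) := by
    intro k hk hk2
    rw [thN_update M n m hm1 hm2 t m, if_pos rfl, thN_update M n m hm1 hm2 t k, if_neg hk]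
    rw [show cexp (2 * I * ((t - thN M (ThbarV M n) k : ℝ) : ℂ))
        = cexp (-2 * I * ((thN M (ThbarV M n) k : ℝ) : ℂ)) * cexp (2 * I * (t : ℂ)) by
      rw [← Complex.exp_add]; congr 1; push_cast; ring]
    ring
  have hdiff : ∑ k ∈ Finset.Icc m (M - 1) \ {m}, (-1 : ℂ) ^ (m + k) *
        cexp (2 * I * ((thN M (Function.update (ThbarV M n) ⟨m - 1, Nat.sub_lt_sub_right hm1 (by omega)⟩ t) m
          - thN M (Function.update (ThbarV M n) ⟨m - 1, Nat.sub_lt_sub_right hm1 (by omega)⟩ t) k : ℝ) : ℂ))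
      = (∑ k ∈ Finset.Icc m (M - 1) \ {m}, (-1 : ℂ) ^ (m + k) *
          cexp (-2 * I * ((thN M (ThbarV M n) k : ℝ) : ℂ))) * cexp (2 * I * (t : ℂ)) := by
    rw [Finset.sum_mul]
    apply Finset.sum_congr rfl
    intro k hk
    rw [Finset.mem_sdiff, Finset.mem_singleton, Finset.mem_Icc] at hk
    exact hsplit k hk.2 hk.1.2
  have hdiff2 : ∑ k ∈ Finset.range m, (-1 : ℂ) ^ (m + k) *
        cexp (2 * I * ((thN M (Function.update (ThbarV M n) ⟨m - 1, Nat.sub_lt_sub_right hm1 (by omega)⟩ t) m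
          - thN M (Function.update (ThbarV M n) ⟨m - 1, Nat.sub_lt_sub_right hm1 (by omega)⟩ t) k : ℝ) : ℂ))
      = (∑ k ∈ Finset.range m, (-1 : ℂ) ^ (m + k) *
          cexp (-2 * I * ((thN M (ThbarV M n) k : ℝ) : ℂ))) * cexp (2 * I * (t : ℂ)) := by
    rw [Finset.sum_mul]
    apply Finset.sum_congr rfl
    intro k hk
    rw [Finset.mem_range] at hk
    exact hsplit k (by omega) (by omega)
  have hmm : (-1 : ℂ) ^ (m + m) *
        cexp (2 * I * ((thN M (Function.update (ThbarV M n) ⟨m - 1, Nat.sub_lt_sub_right hm1 (by omega)⟩ t) m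
          - thN M (Function.update (ThbarV M n) ⟨m - 1, Nat.sub_lt_sub_right hm1 (by omega)⟩ t) m : ℝ) : ℂ)) = 1 := by
    rw [thN_update M n m hm1 hm2 t m, if_pos rfl]
    rw [show ((t - t : ℝ) : ℂ) = 0 by push_cast; ring]
    rw [show (-1 : ℂ) ^ (m + m) = 1 by rw [← two_mul, pow_mul]; norm_num]
    simp
  rw [hdiff, hdiff2, hmm]
  ring

lemma expP (x : ℝ) : cexp (2 * I * (x : ℂ)) =
    ((Real.cos (2 * x) : ℝ) : ℂ) + ((Real.sin (2 * x) : ℝ) : ℂ) * I := by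
  rw [show (2 * I * (x : ℂ)) = ((2 * x : ℝ) : ℂ) * I by push_cast; ring, Complex.exp_mul_I]
  simp [Complex.ofReal_cos, Complex.ofReal_sin]

lemma expN (x : ℝ) : cexp (-2 * I * (x : ℂ)) =
    ((Real.cos (2 * x) : ℝ) : ℂ) - ((Real.sin (2 * x) : ℝ) : ℂ) * I := by
  have h := expP (-x)
  rw [show (2 * I * ((-x : ℝ) : ℂ)) = -2 * I * (x : ℂ) by push_cast; ring] at h
  rw [h, show (2 * -x) = -(2*x) by ring, Real.cos_neg, Real.sin_neg]
  push_cast; ring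
set_option maxHeartbeats 1000000 in
theorem grad_Fbar_at_thbar (M n : ℕ) (hM : 3 ≤ M) (hModd : Odd M)
    (hn : n = 1 ∨ n = 2) :
    ∀ l m : ℕ, ∀ (_hl1 : 1 ≤ l) (_hl2 : l ≤ M - 1) (hm1 : 1 ≤ m) (hm2 : m ≤ M - 1),
      (l = m →
        Real.sin (thbarZ M n 1) ^ 2 * partialF M l (ThbarV M n) ⟨m - 1, by omega⟩ =
          2 * Real.sin (thbarZ M n 1) ^ 2 -
            (-1 : ℝ) ^ m * Real.sin (2 * thbarZ M n 1) * Real.sin (2 * thbarZ M n m)) ∧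
      (l < m →
        Real.sin (thbarZ M n 1) ^ 2 * partialF M l (ThbarV M n) ⟨m - 1, by omega⟩ =
          (-1 : ℝ) ^ (m + 1) * Real.sin (2 * thbarZ M n 1) *
            (Real.sin (2 * thbarZ M n m) +
              (-1 : ℝ) ^ l * Real.sin (2 * thbarZ M n ((l : ℤ) - (m : ℤ))))) ∧
      (m < l →
        Real.sin (thbarZ M n 1) ^ 2 * partialF M l (ThbarV M n) ⟨m - 1, by omega⟩ =
          (-1 : ℝ) ^ (m + 1) * Real.sin (2 * thbarZ M n 1) *
            (Real.sin (2 * thbarZ M n m) -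
              (-1 : ℝ) ^ l * Real.sin (2 * thbarZ M n ((l : ℤ) - (m : ℤ))))) := by
  intro l m hl1 hl2 hm1 hm2
  have hModd' : ((-1 : ℂ)) ^ M = -1 := Odd.neg_one_pow hModd
  have hMne : (M : ℝ) ≠ 0 := by positivity
  have hs0 : Real.sin ((n : ℝ) * π / (M : ℝ)) ≠ 0 := ne_of_gt (sin_alpha_pos M n hM hn)
  have hc0 : Real.cos ((n : ℝ) * π / (M : ℝ)) ≠ 0 := cos_alpha_ne M n hM hModd hn
  obtain ⟨hKv, hHvAll⟩ := KH_eval M n hM hModd hs0 hc0 (by field_simp)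
  have hKne : KbarV M (ThbarV M n) ≠ 0 := by
    rw [hKv]
    exact div_ne_zero (mul_ne_zero (neg_ne_zero.2 Complex.I_ne_zero)
      (Complex.ofReal_ne_zero.2 hs0)) (Complex.ofReal_ne_zero.2 hc0)
  have hth1 : thbarZ M n 1 = ((n : ℝ) * π / (M : ℝ)) := by unfold thbarZ; push_cast; ring
  have ht0 : ThbarV M n ⟨m - 1, by omega⟩ = (m : ℝ) * ((n : ℝ) * π / (M : ℝ)) := by
    unfold ThbarV
    rw [show (((⟨m - 1, by omega⟩ : Fin (M - 1)) : ℕ) : ℝ) = ((m - 1 : ℕ) : ℝ) from rfl,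
      Nat.cast_sub hm1]
    push_cast
    ring
  have hthm : (2 : ℝ) * thbarZ M n (m : ℤ) = 2 * ((m : ℝ) * ((n : ℝ) * π / (M : ℝ))) := by
    unfold thbarZ; push_cast; ring
  have hthlm : (2 : ℝ) * thbarZ M n ((l : ℤ) - (m : ℤ)) = 2 * (((l : ℝ) - (m : ℝ)) * ((n : ℝ) * π / (M : ℝ))) := by
    unfold thbarZ; push_cast; ring
  have hsin2 : Real.sin (2 * ((n : ℝ) * π / (M : ℝ))) = 2 * (Real.sin ((n : ℝ) * π / (M : ℝ)) * Real.cos ((n : ℝ) * π / (M : ℝ))) := by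
    rw [Real.sin_two_mul]; ring
  have hKd := hasDeriv_of_path _ _ (((-1 : ℂ)) ^ M * (-1) ^ m) (-2 * I)
    (ThbarV M n ⟨m - 1, by omega⟩) (Kpath M n m hM hm1 hm2)
  have hKd' : HasDerivAt
      (fun t => KbarV M (Function.update (ThbarV M n) ⟨m - 1, by omega⟩ t))
      (-(-1 : ℂ) ^ m * (-2 * I) * cexp (-2 * I * (((m : ℝ) * ((n : ℝ) * π / (M : ℝ)) : ℝ) : ℂ)))
      (ThbarV M n ⟨m - 1, by omega⟩) := by
    convert hKd using 1
    rw [ht0]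
    linear_combination ((-1 : ℂ) ^ m * (cexp (-2 * I * (((m : ℝ) * ((n : ℝ) * π / (M : ℝ)) : ℝ) : ℂ)) * (2 * I))) * hModd'
  refine ⟨?_, ?_, ?_⟩
  · -- l = m
    intro heq
    subst heq
    have hpath := Hpath_eq M n l hm1 hm2
    have hDD := hpath (ThbarV M n ⟨l - 1, by omega⟩)
    rw [Function.update_eq_self] at hDD
    have hHd := hasDeriv_of_path _ _ _ (2 * I) (ThbarV M n ⟨l - 1, by omega⟩) hpath
    have hC0 : ((1 - (-1 : ℂ) ^ M) / 2 + (-1 : ℂ) ^ M) = 0 := by rw [hModd']; norm_num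
    have hHK : HbarV M (ThbarV M n) l = KbarV M (ThbarV M n) := by
      rw [hHvAll l hm1 hm2, hKv]
    have hHd' : HasDerivAt
        (fun t => HbarV M (Function.update (ThbarV M n) ⟨l - 1, by omega⟩ t) l)
        (2 * I * KbarV M (ThbarV M n))
        (ThbarV M n ⟨l - 1, by omega⟩) := by
      convert hHd using 1
      linear_combination (2 * I : ℂ) * hDD - (2 * I : ℂ) * hHK + (2 * I : ℂ) * hC0
    have hpf := partialF_eq M l (ThbarV M n) ⟨l - 1, by omega⟩ _ _ hHd' hKd' hKne
    rw [hth1, hpf, hHK, hKv]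
    rw [expN ((l : ℝ) * ((n : ℝ) * π / (M : ℝ)))]
    rw [show ((-1 : ℂ)) ^ l = (((-1 : ℝ) ^ l : ℝ) : ℂ) by push_cast; ring]
    rw [hthm, hsin2]
    simp only [Complex.add_re, Complex.add_im, Complex.sub_re, Complex.sub_im,
      Complex.mul_re, Complex.mul_im, Complex.div_re, Complex.div_im,
      Complex.neg_re, Complex.neg_im, Complex.I_re, Complex.I_im,
      Complex.ofReal_re, Complex.ofReal_im, Complex.normSq_apply, pow_two,
      Complex.re_ofNat, Complex.im_ofNat]
    field_simp
    ring
  · -- l < m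
    intro hlt
    have hpath := Hpath_gt M n l m hm1 hm2 hl1 hlt
    have hHd := hasDeriv_of_path _ _
      ((-1 : ℂ) ^ M * ((-1 : ℂ) ^ (l + m) * cexp (2 * I * ((thN M (ThbarV M n) l : ℝ) : ℂ))))
      (-2 * I) (ThbarV M n ⟨m - 1, by omega⟩) hpath
    have hexp : cexp (2 * I * (((l : ℝ) * ((n : ℝ) * π / (M : ℝ)) : ℝ) : ℂ)) *
        cexp (-2 * I * (((m : ℝ) * ((n : ℝ) * π / (M : ℝ)) : ℝ) : ℂ))
        = cexp (2 * I * ((((l : ℝ) - (m : ℝ)) * ((n : ℝ) * π / (M : ℝ)) : ℝ) : ℂ)) := by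
      rw [← Complex.exp_add]; congr 1; push_cast; ring
    have hHd' : HasDerivAt
        (fun t => HbarV M (Function.update (ThbarV M n) ⟨m - 1, by omega⟩ t) l)
        (-(-1 : ℂ) ^ (l + m) * (-2 * I) * cexp (2 * I * ((((l : ℝ) - (m : ℝ)) * ((n : ℝ) * π / (M : ℝ)) : ℝ) : ℂ)))
        (ThbarV M n ⟨m - 1, by omega⟩) := by
      convert hHd using 1
      rw [thN_thbar M n l hl2, ht0]
      linear_combination (-((-1 : ℂ) ^ M) * ((-1 : ℂ) ^ (l + m) * (-2 * I))) * hexp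
        + (-(((-1 : ℂ) ^ (l + m)) * (-2 * I) *
            cexp (2 * I * ((((l : ℝ) - (m : ℝ)) * ((n : ℝ) * π / (M : ℝ)) : ℝ) : ℂ)))) * hModd'
    have hpf := partialF_eq M l (ThbarV M n) ⟨m - 1, by omega⟩ _ _ hHd' hKd' hKne
    rw [hth1, hpf, hHvAll l hl1 hl2, hKv]
    rw [expP (((l : ℝ) - (m : ℝ)) * ((n : ℝ) * π / (M : ℝ))), expN ((m : ℝ) * ((n : ℝ) * π / (M : ℝ)))]
    rw [show ((-1 : ℂ)) ^ (l + m) = (((-1 : ℝ) ^ (l + m) : ℝ) : ℂ) by push_cast; ring]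
    rw [show ((-1 : ℂ)) ^ m = (((-1 : ℝ) ^ m : ℝ) : ℂ) by push_cast; ring]
    rw [hthm, hthlm, hsin2]
    simp only [Complex.add_re, Complex.add_im, Complex.sub_re, Complex.sub_im,
      Complex.mul_re, Complex.mul_im, Complex.div_re, Complex.div_im,
      Complex.neg_re, Complex.neg_im, Complex.I_re, Complex.I_im,
      Complex.ofReal_re, Complex.ofReal_im, Complex.normSq_apply, pow_two,
      Complex.re_ofNat, Complex.im_ofNat]
    field_simp
    ring
  · -- m < l
    intro hlt
    have hpath := Hpath_lt M n l m hm1 hm2 hl2 hlt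
    have hHd := hasDeriv_of_path _ _
      ((-1 : ℂ) ^ (l + m) * cexp (2 * I * ((thN M (ThbarV M n) l : ℝ) : ℂ)))
      (-2 * I) (ThbarV M n ⟨m - 1, by omega⟩) hpath
    have hexp : cexp (2 * I * (((l : ℝ) * ((n : ℝ) * π / (M : ℝ)) : ℝ) : ℂ)) *
        cexp (-2 * I * (((m : ℝ) * ((n : ℝ) * π / (M : ℝ)) : ℝ) : ℂ))
        = cexp (2 * I * ((((l : ℝ) - (m : ℝ)) * ((n : ℝ) * π / (M : ℝ)) : ℝ) : ℂ)) := by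
      rw [← Complex.exp_add]; congr 1; push_cast; ring
    have hHd' : HasDerivAt
        (fun t => HbarV M (Function.update (ThbarV M n) ⟨m - 1, by omega⟩ t) l)
        ((-1 : ℂ) ^ (l + m) * (-2 * I) * cexp (2 * I * ((((l : ℝ) - (m : ℝ)) * ((n : ℝ) * π / (M : ℝ)) : ℝ) : ℂ)))
        (ThbarV M n ⟨m - 1, by omega⟩) := by
      convert hHd using 1
      rw [thN_thbar M n l hl2, ht0]
      linear_combination ((-1 : ℂ) ^ (l + m) * (2 * I)) * hexp
    have hpf := partialF_eq M l (ThbarV M n) ⟨m - 1, by omega⟩ _ _ hHd' hKd' hKne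
    rw [hth1, hpf, hHvAll l hl1 hl2, hKv]
    rw [expP (((l : ℝ) - (m : ℝ)) * ((n : ℝ) * π / (M : ℝ))), expN ((m : ℝ) * ((n : ℝ) * π / (M : ℝ)))]
    rw [show ((-1 : ℂ)) ^ (l + m) = (((-1 : ℝ) ^ (l + m) : ℝ) : ℂ) by push_cast; ring]
    rw [show ((-1 : ℂ)) ^ m = (((-1 : ℝ) ^ m : ℝ) : ℂ) by push_cast; ring]
    rw [hthm, hthlm, hsin2]
    simp only [Complex.add_re, Complex.add_im, Complex.sub_re, Complex.sub_im,
      Complex.mul_re, Complex.mul_im, Complex.div_re, Complex.div_im,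
      Complex.neg_re, Complex.neg_im, Complex.I_re, Complex.I_im,
      Complex.ofReal_re, Complex.ofReal_im, Complex.normSq_apply, pow_two,
      Complex.re_ofNat, Complex.im_ofNat]
    field_simp
    ring
end
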